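/- Let n be a positive integer and let p(x) = Σ_{k=0}^{m} a_k x^{2k+1} be an odd polynomial with real coefficients such that 2^{2n²}·(f((1+x)/2^{2n}) − f((1−x)/2^{2n})) = p(x) for all 0 ≤ x ≤ 1. Then for all 0 ≤ x ≤ 1, 2^{2n²+2n+1}·(f((1+x)/2^{2n+1}) + f((1−x)/2^{2n+1})) = 2^{2n²+2n+2}·f(1/2^{2n+1}) + Σ_{k=0}^{m} (a_k/(k+1))·x^{2k+2}. -/

import Mathlib

open scoped BigOperators

theorem fabius_stmt_10 (f : ℝ → ℝ)
    (hcont : ContinuousOn f (Set.Ici 0))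
    (hsym : ∀ x : ℝ, 0 ≤ x → x ≤ 1 → f x + f (1 - x) = 1)
    (hint : ∀ x : ℝ, 0 ≤ x → f x = ∫ t in (0:ℝ)..(2 * x), f t)
    (n m : ℕ) (hn : 0 < n) (a : ℕ → ℝ)
    (hp : ∀ x : ℝ, 0 ≤ x → x ≤ 1 →
      (2 : ℝ) ^ (2 * n ^ 2) * (f ((1 + x) / 2 ^ (2 * n)) - f ((1 - x) / 2 ^ (2 * n))) =
        ∑ k ∈ Finset.range (m + 1), a k * x ^ (2 * k + 1)) :
    ∀ x : ℝ, 0 ≤ x → x ≤ 1 →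
      (2 : ℝ) ^ (2 * n ^ 2 + 2 * n + 1) * (f ((1 + x) / 2 ^ (2 * n + 1)) + f ((1 - x) / 2 ^ (2 * n + 1))) =
        (2 : ℝ) ^ (2 * n ^ 2 + 2 * n + 2) * f (1 / 2 ^ (2 * n + 1)) +
          ∑ k ∈ Finset.range (m + 1), (a k / ((k : ℝ) + 1)) * x ^ (2 * k + 2) := by
  intro x hx0 hx1
  set c : ℝ := 2 ^ (2 * n) with hc
  have hcpos : (0:ℝ) < c := by positivity
  have hcne : c ≠ 0 := ne_of_gt hcpos
  -- interval integrability of f between nonnegative points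
  have hfint : ∀ u v : ℝ, 0 ≤ u → 0 ≤ v →
      IntervalIntegrable f MeasureTheory.volume u v := by
    intro u v hu hv
    exact (hcont.mono (fun t ht => le_trans (le_min hu hv) ht.1)).intervalIntegrable
  -- ∫₀^z f = f (z/2) for z ≥ 0
  have hI : ∀ z : ℝ, 0 ≤ z → (∫ t in (0:ℝ)..z, f t) = f (z / 2) := by
    intro z hz
    have h2 : 2 * (z / 2) = z := by ring
    rw [hint (z / 2) (by linarith), h2]
  -- integrate hp from 0 to x
  have hcontA : IntervalIntegrable (fun t => f ((1 + t) / c)) MeasureTheory.volume 0 x := by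
    apply ContinuousOn.intervalIntegrable
    apply hcont.comp
      (Continuous.continuousOn ((continuous_const.add continuous_id).div_const c))
    intro t ht
    have h1 : min 0 x ≤ t := ht.1
    have h0 : (0:ℝ) ≤ t := le_trans (by simp [hx0]) h1
    exact Set.mem_Ici.2 (div_nonneg (show (0:ℝ) ≤ 1 + t by linarith) hcpos.le)
  have hcontB : IntervalIntegrable (fun t => f ((1 - t) / c)) MeasureTheory.volume 0 x := by
    apply ContinuousOn.intervalIntegrable
    apply hcont.comp
      (Continuous.continuousOn ((continuous_const.sub continuous_id).div_const c))
    intro t ht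
    have h1 : min 0 x ≤ t := ht.1
    have h2 : t ≤ max 0 x := ht.2
    have h0 : (0:ℝ) ≤ t := le_trans (by simp [hx0]) h1
    have h1' : t ≤ 1 := le_trans h2 (by simp [hx1])
    have : (0:ℝ) ≤ 1 - t := by linarith
    exact Set.mem_Ici.2 (by positivity)
  have hintegrated :
      (2:ℝ) ^ (2 * n ^ 2) *
        ((∫ t in (0:ℝ)..x, f ((1 + t) / c)) - ∫ t in (0:ℝ)..x, f ((1 - t) / c)) =
      ∑ k ∈ Finset.range (m + 1), a k * x ^ (2 * k + 2) / (2 * (k:ℝ) + 2) := by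
    have hcongr :
        (∫ t in (0:ℝ)..x, (2:ℝ) ^ (2 * n ^ 2) * (f ((1 + t) / c) - f ((1 - t) / c))) =
        ∫ t in (0:ℝ)..x, ∑ k ∈ Finset.range (m + 1), a k * t ^ (2 * k + 1) := by
      apply intervalIntegral.integral_congr
      intro t ht
      have h1 : min 0 x ≤ t := ht.1
      have h2 : t ≤ max 0 x := ht.2
      exact hp t (le_trans (by simp [hx0]) h1) (le_trans h2 (by simp [hx1]))
    rw [intervalIntegral.integral_const_mul, intervalIntegral.integral_sub hcontA hcontB]
      at hcongr
    rw [hcongr, intervalIntegral.integral_finset_sum]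
    · apply Finset.sum_congr rfl
      intro k _
      rw [intervalIntegral.integral_const_mul, integral_pow]
      push_cast
      ring
    · intro k _
      exact (continuous_const.mul (continuous_pow _)).intervalIntegrable 0 x
  -- compute the two integrals via substitution
  have hxc0 : (0:ℝ) ≤ c⁻¹ := by positivity
  have hA : (∫ t in (0:ℝ)..x, f ((1 + t) / c)) =
      c * (f ((c⁻¹ * x + c⁻¹) / 2) - f (c⁻¹ / 2)) := by
    have he : ∀ t : ℝ, (1 + t) / c = c⁻¹ * t + c⁻¹ := fun t => by ring
    simp_rw [he]
    rw [intervalIntegral.integral_comp_mul_add f (inv_ne_zero hcne) c⁻¹]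
    rw [mul_zero, zero_add, inv_inv, smul_eq_mul]
    have h1 : (0:ℝ) ≤ c⁻¹ * x + c⁻¹ := by positivity
    rw [← intervalIntegral.integral_interval_sub_left (hfint 0 _ le_rfl h1)
      (hfint 0 _ le_rfl hxc0), hI _ h1, hI _ hxc0]
  have h1x : (0:ℝ) ≤ 1 - x := by linarith
  have hB : (∫ t in (0:ℝ)..x, f ((1 - t) / c)) =
      c * (f (c⁻¹ / 2) - f ((-c⁻¹ * x + c⁻¹) / 2)) := by
    have he : ∀ t : ℝ, (1 - t) / c = -c⁻¹ * t + c⁻¹ := fun t => by ring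
    simp_rw [he]
    rw [intervalIntegral.integral_comp_mul_add f (neg_ne_zero.2 (inv_ne_zero hcne)) c⁻¹]
    rw [mul_zero, zero_add, smul_eq_mul]
    have h1 : (0:ℝ) ≤ -c⁻¹ * x + c⁻¹ := by
      have : -c⁻¹ * x + c⁻¹ = (1 - x) * c⁻¹ := by ring
      rw [this]; positivity
    rw [← intervalIntegral.integral_interval_sub_left (hfint 0 _ le_rfl h1)
      (hfint 0 _ le_rfl hxc0), hI _ h1, hI _ hxc0]
    have : (-c⁻¹)⁻¹ = -c := by rw [inv_neg, inv_inv]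
    rw [this]; ring
  -- rewrite the arguments appearing in the goal
  have harg1 : (1 + x) / 2 ^ (2 * n + 1) = (c⁻¹ * x + c⁻¹) / 2 := by
    rw [pow_succ, ← hc]; field_simp; ring
  have harg2 : (1 - x) / 2 ^ (2 * n + 1) = (-c⁻¹ * x + c⁻¹) / 2 := by
    rw [pow_succ, ← hc]; field_simp; ring
  have harg3 : (1 : ℝ) / 2 ^ (2 * n + 1) = c⁻¹ / 2 := by
    rw [pow_succ, ← hc]; field_simp
  rw [harg1, harg2, harg3]
  rw [hA, hB] at hintegrated
  have hpow1 : (2:ℝ) ^ (2 * n ^ 2 + 2 * n + 1) = 2 ^ (2 * n ^ 2) * c * 2 := by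
    rw [hc, ← pow_add]; ring_nf
  have hpow2 : (2:ℝ) ^ (2 * n ^ 2 + 2 * n + 2) = 2 ^ (2 * n ^ 2) * c * 4 := by
    rw [hc, ← pow_add]
    rw [show 2 * n ^ 2 + 2 * n + 2 = (2 * n ^ 2 + 2 * n) + 2 by ring,
      show 2 * n ^ 2 + 2 * n = 2 * n ^ 2 + 2 * n by rfl, pow_add]
    ring
  rw [hpow1, hpow2]
  have hsum : ∑ k ∈ Finset.range (m + 1), a k / ((k:ℝ) + 1) * x ^ (2 * k + 2) =
      2 * ∑ k ∈ Finset.range (m + 1), a k * x ^ (2 * k + 2) / (2 * (k:ℝ) + 2) := by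
    rw [Finset.mul_sum]
    apply Finset.sum_congr rfl
    intro k _
    have hk : ((k:ℝ) + 1) ≠ 0 := by positivity
    field_simp
  rw [hsum, ← hintegrated]
  ring
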